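/- Define χ(s) = Σ_{k=0}^{s} s!/k!. Let ε be a real number with 0 < ε < 1 and let R, N be natural numbers with R + 1 ≤ N. Then (1/N!) · Σ_{σ ∈ S_N, fix(σ) ≤ N−R−1} (1−ε)^{2(N − fix(σ))} · χ(fix(σ)) < (1 + e/(R+2)!) · (1−ε)^{2(R+1)} / (1 − (1−ε)²). -/

import Mathlib

open Finset

/-- The number of fixed points of a permutation. -/
def fixCount {N : ℕ} (σ : Equiv.Perm (Fin N)) : ℕ :=
  (Finset.univ.filter fun i => σ i = i).card

/-- `χ(s) = Σ_{k=0}^{s} s!/k!` (as a real number). -/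
noncomputable def chi (s : ℕ) : ℝ :=
  ∑ k ∈ Finset.range (s + 1), (s.factorial : ℝ) / (k.factorial : ℝ)

private lemma numDer_div_eq (n : ℕ) :
    (numDerangements n : ℝ) / n.factorial
      = ∑ k ∈ Finset.range (n + 1), (-1 : ℝ) ^ k / k.factorial := by
  rw [← Int.cast_natCast (numDerangements n), numDerangements_sum]
  push_cast
  rw [Finset.sum_div]
  refine Finset.sum_congr rfl ?_
  intro k hk
  have h_le : k ≤ n := Finset.mem_range_succ_iff.mp hk
  rw [Nat.ascFactorial_eq_div, add_tsub_cancel_of_le h_le]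
  push_cast [Nat.factorial_dvd_factorial h_le]
  field_simp [Nat.factorial_ne_zero]

private lemma tendsto_partial_alt :
    Filter.Tendsto (fun n => ∑ i ∈ Finset.range n, (-1 : ℝ) ^ i * ((i.factorial : ℝ))⁻¹)
      Filter.atTop (nhds (Real.exp (-1))) := by
  have h := NormedSpace.expSeries_div_hasSum_exp (-1 : ℝ)
  rw [← Real.exp_eq_exp_ℝ] at h
  have h2 := h.tendsto_sum_nat
  simpa [div_eq_mul_inv] using h2

private lemma partial_le (m : ℕ) :
    ∑ k ∈ Finset.range (m + 1), (-1 : ℝ) ^ k / k.factorial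
      ≤ Real.exp (-1) + 1 / ((m + 1).factorial : ℝ) := by
  have hanti : Antitone (fun i : ℕ => ((i.factorial : ℝ))⁻¹) := by
    intro a b hab
    have h1 : (0:ℝ) < a.factorial := by exact_mod_cast a.factorial_pos
    have h2 : (a.factorial : ℝ) ≤ b.factorial := by exact_mod_cast Nat.factorial_le hab
    exact inv_anti₀ h1 h2
  have hupper : ∀ k : ℕ,
      ∑ i ∈ Finset.range (2 * k), (-1 : ℝ) ^ i * ((i.factorial : ℝ))⁻¹ ≤ Real.exp (-1) :=
    fun k => hanti.alternating_series_le_tendsto tendsto_partial_alt k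
  have hfpos : (0:ℝ) < ((m+1).factorial : ℝ) := by exact_mod_cast (m+1).factorial_pos
  rcases Nat.even_or_odd m with he | ho
  · obtain ⟨k, hk⟩ : ∃ k, m + 2 = 2 * k := by
      obtain ⟨j, hj⟩ := he; exact ⟨j + 1, by omega⟩
    have h2 := hupper k
    rw [← hk, Finset.sum_range_succ] at h2
    have hsign : (-1 : ℝ) ^ (m + 1) = -1 := Odd.neg_one_pow (by exact he.add_one)
    rw [hsign] at h2
    have : ∑ i ∈ Finset.range (m + 1), (-1 : ℝ) ^ i * ((i.factorial : ℝ))⁻¹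
        ≤ Real.exp (-1) + ((m+1).factorial : ℝ)⁻¹ := by linarith
    simpa [div_eq_mul_inv] using this
  · obtain ⟨j, hj⟩ := ho
    have h2 := hupper (j + 1)
    rw [show 2 * (j+1) = m + 1 by omega] at h2
    have hp : (0:ℝ) < 1 / ((m+1).factorial : ℝ) := by positivity
    calc ∑ k ∈ Finset.range (m + 1), (-1 : ℝ) ^ k / k.factorial
        = ∑ i ∈ Finset.range (m + 1), (-1 : ℝ) ^ i * ((i.factorial : ℝ))⁻¹ := by
          simp [div_eq_mul_inv]
      _ ≤ Real.exp (-1) := h2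
      _ ≤ _ := by linarith

private lemma numDer_le (m : ℕ) :
    (numDerangements m : ℝ)
      ≤ (m.factorial : ℝ) * (Real.exp (-1) + 1 / ((m + 1).factorial : ℝ)) := by
  have hm : (0:ℝ) < (m.factorial : ℝ) := by exact_mod_cast m.factorial_pos
  have h := partial_le m
  rw [← numDer_div_eq m] at h
  rw [div_le_iff₀ hm] at h
  linarith [h]

private lemma chi_le (s : ℕ) : chi s ≤ Real.exp 1 * (s.factorial : ℝ) := by
  have h1 : chi s = (s.factorial : ℝ) * ∑ k ∈ Finset.range (s + 1), 1 / (k.factorial : ℝ) := by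
    rw [Finset.mul_sum]
    refine Finset.sum_congr rfl fun k _ => ?_
    rw [mul_one_div]
  have h2 : ∑ k ∈ Finset.range (s + 1), 1 / (k.factorial : ℝ) ≤ Real.exp 1 := by
    have := Real.sum_le_exp_of_nonneg (x := 1) (by norm_num) (s + 1)
    simpa using this
  have hf : (0:ℝ) ≤ (s.factorial : ℝ) := by positivity
  rw [h1, mul_comm (Real.exp 1)]
  exact mul_le_mul_of_nonneg_left h2 hf

private lemma chi_nonneg (s : ℕ) : 0 ≤ chi s := by
  unfold chi; positivity

private lemma card_fixset_eq (N : ℕ) (F : Finset (Fin N)) :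
    ((Finset.univ : Finset (Equiv.Perm (Fin N))).filter
        (fun σ => Finset.univ.filter (fun i => σ i = i) = F)).card
      = numDerangements (N - F.card) := by
  rw [← Fintype.card_subtype]
  have e1 : {σ : Equiv.Perm (Fin N) // Finset.univ.filter (fun i => σ i = i) = F}
      ≃ {f : Equiv.Perm (Fin N) // ∀ a, ¬ (a ∉ F) ↔ a ∈ Function.fixedPoints ⇑f} :=
    Equiv.subtypeEquivRight (fun σ => by
      rw [Finset.ext_iff]
      constructor
      · intro h a
        have := h a
        simp only [Finset.mem_filter, Finset.mem_univ, true_and] at this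
        simp only [not_not, Function.mem_fixedPoints, Function.IsFixedPt]
        tauto
      · intro h a
        have := h a
        simp only [not_not, Function.mem_fixedPoints, Function.IsFixedPt] at this
        simp only [Finset.mem_filter, Finset.mem_univ, true_and]
        tauto)
  have e2 := derangements.subtypeEquiv (fun a : Fin N => a ∉ F)
  have hcard := Fintype.card_congr (e1.trans e2.symm)
  rw [hcard, card_derangements_eq_numDerangements]
  congr 1
  rw [Fintype.card_subtype_compl]
  simp [Fintype.card_coe]

set_option maxHeartbeats 1000000 in
/-- **Bound on the truncation error of the distinguishability function.**
For `0 < ε < 1` and `R + 1 ≤ N`,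
`(1/N!) Σ_{σ ∈ S_N, fix(σ) ≤ N-R-1} (1-ε)^{2(N-fix(σ))} χ(fix(σ))
  < (1 + e/(R+2)!) · (1-ε)^{2(R+1)} / (1-(1-ε)²)`. -/
theorem truncation_error_bound (N R : ℕ) (hRN : R + 1 ≤ N)
    (ε : ℝ) (hε0 : 0 < ε) (hε1 : ε < 1) :
    (1 / (N.factorial : ℝ)) *
        ∑ σ ∈ (Finset.univ : Finset (Equiv.Perm (Fin N))).filter
            (fun σ => fixCount σ ≤ N - R - 1),
          (1 - ε) ^ (2 * (N - fixCount σ)) * chi (fixCount σ) <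
      (1 + Real.exp 1 / ((R + 2).factorial : ℝ)) *
        (1 - ε) ^ (2 * (R + 1)) / (1 - (1 - ε) ^ 2) := by
  have hq0 : (0:ℝ) < 1 - ε := by linarith
  have hq1 : 1 - ε < 1 := by linarith
  set q : ℝ := 1 - ε with hqdef
  set t : ℕ := N - R - 1 with htdef
  set c : ℝ := Real.exp 1 / ((R + 2).factorial : ℝ) with hcdef
  have hc0 : 0 ≤ c := by positivity
  have hNf : (0:ℝ) < (N.factorial : ℝ) := by exact_mod_cast N.factorial_pos
  -- Step 1: group permutations by their fixed-point set
  have hstep1 :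
      ∑ σ ∈ (Finset.univ : Finset (Equiv.Perm (Fin N))).filter (fun σ => fixCount σ ≤ t),
          q ^ (2 * (N - fixCount σ)) * chi (fixCount σ)
        = ∑ F : Finset (Fin N), (numDerangements (N - F.card) : ℝ) *
            (if F.card ≤ t then q ^ (2 * (N - F.card)) * chi F.card else 0) := by
    calc ∑ σ ∈ (Finset.univ : Finset (Equiv.Perm (Fin N))).filter (fun σ => fixCount σ ≤ t),
          q ^ (2 * (N - fixCount σ)) * chi (fixCount σ)
        = ∑ σ : Equiv.Perm (Fin N),
            (fun F : Finset (Fin N) =>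
              if F.card ≤ t then q ^ (2 * (N - F.card)) * chi F.card else 0)
              ((fun σ : Equiv.Perm (Fin N) => Finset.univ.filter (fun i => σ i = i)) σ) := by
          rw [Finset.sum_filter]
          exact Finset.sum_congr rfl (fun σ _ => by simp only [fixCount]; rfl)
      _ = ∑ F : Finset (Fin N),
            ∑ σ ∈ Finset.univ.filter
                (fun σ : Equiv.Perm (Fin N) => Finset.univ.filter (fun i => σ i = i) = F),
              (fun F : Finset (Fin N) =>
                if F.card ≤ t then q ^ (2 * (N - F.card)) * chi F.card else 0) F :=
          (Finset.sum_fiberwise' (Finset.univ : Finset (Equiv.Perm (Fin N)))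
            (fun σ : Equiv.Perm (Fin N) => Finset.univ.filter (fun i => σ i = i))
            (fun F : Finset (Fin N) =>
              if F.card ≤ t then q ^ (2 * (N - F.card)) * chi F.card else 0)).symm
      _ = _ := by
          refine Finset.sum_congr rfl fun F _ => ?_
          rw [Finset.sum_const, card_fixset_eq, nsmul_eq_mul]
  -- Step 2: group subsets by their cardinality
  have hstep2 :
      ∑ F : Finset (Fin N), (numDerangements (N - F.card) : ℝ) *
          (if F.card ≤ t then q ^ (2 * (N - F.card)) * chi F.card else 0)
        = ∑ s ∈ Finset.range (N + 1), (N.choose s : ℝ) * ((numDerangements (N - s) : ℝ) *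
            (if s ≤ t then q ^ (2 * (N - s)) * chi s else 0)) := by
    have hmap : ∀ F : Finset (Fin N), F ∈ (Finset.univ : Finset (Finset (Fin N))) →
        F.card ∈ Finset.range (N + 1) := by
      intro F _
      rw [Finset.mem_range_succ_iff]
      simpa using F.card_le_univ
    calc ∑ F : Finset (Fin N), (numDerangements (N - F.card) : ℝ) *
          (if F.card ≤ t then q ^ (2 * (N - F.card)) * chi F.card else 0)
        = ∑ s ∈ Finset.range (N + 1),
            ∑ F ∈ (Finset.univ : Finset (Finset (Fin N))).filter (fun F => F.card = s),
              (fun s : ℕ => (numDerangements (N - s) : ℝ) *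
                (if s ≤ t then q ^ (2 * (N - s)) * chi s else 0)) s :=
          (Finset.sum_fiberwise_of_maps_to' hmap (fun s : ℕ =>
            (numDerangements (N - s) : ℝ) *
              (if s ≤ t then q ^ (2 * (N - s)) * chi s else 0))).symm
      _ = _ := by
          refine Finset.sum_congr rfl fun s _ => ?_
          rw [Finset.sum_const, nsmul_eq_mul]
          congr 2
          rw [← Finset.powerset_univ, ← Finset.powersetCard_eq_filter,
            Finset.card_powersetCard, Finset.card_fin]
  -- Step 3: per-term bound
  have hterm : ∀ s ∈ Finset.range (N + 1),
      (1 / (N.factorial : ℝ)) * ((N.choose s : ℝ) * ((numDerangements (N - s) : ℝ) *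
          (if s ≤ t then q ^ (2 * (N - s)) * chi s else 0)))
        ≤ if s ≤ t then (1 + c) * q ^ (2 * (N - s)) else 0 := by
    intro s hs
    have hsN : s ≤ N := Finset.mem_range_succ_iff.mp hs
    by_cases hst : s ≤ t
    · simp only [hst, if_true]
      have hm1 : R + 1 ≤ N - s := by omega
      have key : (N.choose s : ℝ) * ((numDerangements (N - s) : ℝ) * chi s)
          ≤ (1 + c) * (N.factorial : ℝ) := by
        have hD := numDer_le (N - s)
        have hchi := chi_le s
        have hC0 : (0:ℝ) ≤ (N.choose s : ℝ) := Nat.cast_nonneg _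
        have hD0 : (0:ℝ) ≤ (numDerangements (N - s) : ℝ) := Nat.cast_nonneg _
        have hE0 : (0:ℝ) ≤ Real.exp (-1) + 1 / (((N - s) + 1).factorial : ℝ) := by positivity
        calc (N.choose s : ℝ) * ((numDerangements (N - s) : ℝ) * chi s)
            ≤ (N.choose s : ℝ) *
                (((N - s).factorial : ℝ) * (Real.exp (-1) + 1 / (((N - s) + 1).factorial : ℝ)) *
                  (Real.exp 1 * (s.factorial : ℝ))) := by
              have hchi0 : 0 ≤ chi s := chi_nonneg s
              have := mul_le_mul hD hchi hchi0 (by positivity)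
              exact mul_le_mul_of_nonneg_left this hC0
          _ = ((N.choose s : ℝ) * (s.factorial : ℝ) * ((N - s).factorial : ℝ)) *
                ((Real.exp (-1) + 1 / (((N - s) + 1).factorial : ℝ)) * Real.exp 1) := by ring
          _ = (N.factorial : ℝ) * (1 + Real.exp 1 / (((N - s) + 1).factorial : ℝ)) := by
              have h1 : (N.choose s : ℝ) * (s.factorial : ℝ) * ((N - s).factorial : ℝ)
                  = (N.factorial : ℝ) := by
                exact_mod_cast congrArg (Nat.cast : ℕ → ℝ)
                  (Nat.choose_mul_factorial_mul_factorial hsN)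
              have h2 : (Real.exp (-1) + 1 / (((N - s) + 1).factorial : ℝ)) * Real.exp 1
                  = 1 + Real.exp 1 / (((N - s) + 1).factorial : ℝ) := by
                rw [add_mul, Real.exp_neg, inv_mul_cancel₀ (Real.exp_pos 1).ne', one_div,
                  inv_mul_eq_div]
              rw [h1, h2]
          _ ≤ (N.factorial : ℝ) * (1 + c) := by
              have hfle : ((R + 2).factorial : ℝ) ≤ (((N - s) + 1).factorial : ℝ) := by
                exact_mod_cast Nat.factorial_le (by omega)
              have hfpos : (0:ℝ) < ((R + 2).factorial : ℝ) := by
                exact_mod_cast (R + 2).factorial_pos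
              have : Real.exp 1 / (((N - s) + 1).factorial : ℝ) ≤ c := by
                rw [hcdef]
                exact div_le_div_of_nonneg_left (Real.exp_pos 1).le hfpos hfle
              nlinarith
          _ = (1 + c) * (N.factorial : ℝ) := by ring
      have hqm : (0:ℝ) ≤ q ^ (2 * (N - s)) := by positivity
      calc (1 / (N.factorial : ℝ)) * ((N.choose s : ℝ) * ((numDerangements (N - s) : ℝ) *
              (q ^ (2 * (N - s)) * chi s)))
          = ((N.choose s : ℝ) * ((numDerangements (N - s) : ℝ) * chi s)) *
              (q ^ (2 * (N - s)) * (1 / (N.factorial : ℝ))) := by ring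
        _ ≤ ((1 + c) * (N.factorial : ℝ)) * (q ^ (2 * (N - s)) * (1 / (N.factorial : ℝ))) := by
            apply mul_le_mul_of_nonneg_right key
            positivity
        _ = (1 + c) * q ^ (2 * (N - s)) := by
            field_simp
    · simp [hst]
  -- Step 4: sum the geometric series
  have hgeom : ∑ s ∈ Finset.range (N + 1), (if s ≤ t then (1 + c) * q ^ (2 * (N - s)) else 0)
      < (1 + c) * q ^ (2 * (R + 1)) * (1 / (1 - q ^ 2)) := by
    have hfilter : (Finset.range (N + 1)).filter (fun s => s ≤ t) = Finset.range (t + 1) := by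
      ext s
      simp only [Finset.mem_filter, Finset.mem_range]
      omega
    rw [← Finset.sum_filter, hfilter]
    have hre : ∀ s ∈ Finset.range (t + 1),
        (1 + c) * q ^ (2 * (N - s))
          = (fun j => (1 + c) * q ^ (2 * (R + 1)) * (q ^ 2) ^ j) (t + 1 - 1 - s) := by
      intro s hs
      have hst : s ≤ t := Finset.mem_range_succ_iff.mp hs
      simp only
      have harith : 2 * (N - s) = 2 * (R + 1) + 2 * (t + 1 - 1 - s) := by omega
      rw [harith, pow_add, ← pow_mul]
      ring
    rw [Finset.sum_congr rfl hre,
      Finset.sum_range_reflect (fun j => (1 + c) * q ^ (2 * (R + 1)) * (q ^ 2) ^ j) (t + 1)]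
    have hx0 : (0:ℝ) < q ^ 2 := by positivity
    have hx1 : q ^ 2 < 1 := by nlinarith
    have hgs : ∑ j ∈ Finset.range (t + 1), (q ^ 2) ^ j < 1 / (1 - q ^ 2) := by
      have heq : ∑ j ∈ Finset.range (t + 1), (q ^ 2) ^ j
          = (1 - (q ^ 2) ^ (t + 1)) / (1 - q ^ 2) := by
        rw [geom_sum_eq (by linarith : q ^ 2 ≠ 1)]
        rw [div_eq_div_iff (by linarith) (by linarith)]
        ring
      rw [heq, div_lt_div_iff₀ (by linarith) (by linarith)]
      nlinarith [pow_pos hx0 (t + 1)]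
    calc ∑ j ∈ Finset.range (t + 1), (1 + c) * q ^ (2 * (R + 1)) * (q ^ 2) ^ j
        = (1 + c) * q ^ (2 * (R + 1)) * ∑ j ∈ Finset.range (t + 1), (q ^ 2) ^ j := by
          rw [Finset.mul_sum]
      _ < (1 + c) * q ^ (2 * (R + 1)) * (1 / (1 - q ^ 2)) := by
          apply mul_lt_mul_of_pos_left hgs
          positivity
  -- Assemble
  calc (1 / (N.factorial : ℝ)) *
        ∑ σ ∈ (Finset.univ : Finset (Equiv.Perm (Fin N))).filter (fun σ => fixCount σ ≤ t),
          q ^ (2 * (N - fixCount σ)) * chi (fixCount σ)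
      = ∑ s ∈ Finset.range (N + 1), (1 / (N.factorial : ℝ)) *
          ((N.choose s : ℝ) * ((numDerangements (N - s) : ℝ) *
            (if s ≤ t then q ^ (2 * (N - s)) * chi s else 0))) := by
        rw [hstep1, hstep2, Finset.mul_sum]
    _ ≤ ∑ s ∈ Finset.range (N + 1), (if s ≤ t then (1 + c) * q ^ (2 * (N - s)) else 0) :=
        Finset.sum_le_sum hterm
    _ < (1 + c) * q ^ (2 * (R + 1)) * (1 / (1 - q ^ 2)) := hgeom
    _ = (1 + c) * q ^ (2 * (R + 1)) / (1 - q ^ 2) := by rw [mul_one_div]
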